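/- arXiv:2203.07082 — 2 statements merged into one kernel-verified Lean document; each statement's English description precedes it below -/
import Mathlib

section
/- The dihedral angle of a regular tetrahedron is arccos(1/3), and this angle does not divide 2π; equivalently, 2π / arccos(1/3) is not an integer. -/
open Real

lemma cos_two_pi_div_five : Real.cos (2 * Real.pi / 5) = (Real.sqrt 5 - 1) / 4 := by
  have h : 2 * Real.pi / 5 = 2 * (Real.pi / 5) := by ring
  rw [h, Real.cos_two_mul, Real.cos_pi_div_five]
  have h5 : Real.sqrt 5 ^ 2 = 5 := Real.sq_sqrt (by norm_num)
  nlinarith [h5]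

lemma arccos_third_lt : Real.arccos (1/3) < 2 * Real.pi / 5 := by
  have hs : Real.sqrt 5 < 7/3 := by
    rw [show (7:ℝ)/3 = Real.sqrt ((7/3)^2) by rw [Real.sqrt_sq]; norm_num]
    exact Real.sqrt_lt_sqrt (by norm_num) (by norm_num)
  have hc : Real.cos (2 * Real.pi / 5) < 1/3 := by
    rw [cos_two_pi_div_five]; linarith
  have h1 : Real.cos (Real.arccos (1/3)) = 1/3 := Real.cos_arccos (by norm_num) (by norm_num)
  by_contra h
  push_neg at h
  have := Real.strictAntiOn_cos.le_iff_ge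
    (⟨Real.arccos_nonneg _, Real.arccos_le_pi _⟩ : Real.arccos (1/3) ∈ Set.Icc 0 Real.pi)
    (⟨by positivity, by linarith [Real.pi_pos]⟩ : 2 * Real.pi / 5 ∈ Set.Icc 0 Real.pi)
  rw [h1] at this
  linarith [this.mpr h]

lemma pi_div_three_lt : Real.pi / 3 < Real.arccos (1/3) := by
  have h1 : Real.cos (Real.arccos (1/3)) = 1/3 := Real.cos_arccos (by norm_num) (by norm_num)
  have hc : Real.cos (Real.pi / 3) = 1/2 := Real.cos_pi_div_three
  by_contra h
  push_neg at h
  have := Real.strictAntiOn_cos.le_iff_ge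
    (⟨by positivity, by linarith [Real.pi_pos]⟩ : Real.pi / 3 ∈ Set.Icc 0 Real.pi)
    (⟨Real.arccos_nonneg _, Real.arccos_le_pi _⟩ : Real.arccos (1/3) ∈ Set.Icc 0 Real.pi)
  rw [h1, hc] at this
  linarith [this.mpr h]

/-- The dihedral angle of a regular tetrahedron, `arccos(1/3)`, does not divide `2π`:
`2π / arccos(1/3)` is not an integer. -/
theorem stmt_7 : ¬ ∃ k : ℤ, 2 * Real.pi / Real.arccos (1 / 3) = (k : ℝ) := by
  rintro ⟨k, hk⟩
  have hpi := Real.pi_pos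
  have h1 := pi_div_three_lt
  have h2 := arccos_third_lt
  have ha : 0 < Real.arccos (1/3) := by linarith
  have h5 : (5 : ℝ) < 2 * Real.pi / Real.arccos (1/3) := by
    rw [lt_div_iff₀ ha]; linarith
  have h6 : 2 * Real.pi / Real.arccos (1/3) < 6 := by
    rw [div_lt_iff₀ ha]; linarith
  rw [hk] at h5 h6
  have h5' : (5 : ℤ) < k := by exact_mod_cast h5
  have h6' : k < 6 := by exact_mod_cast h6
  omega
end

section
/- Let R = ℝ[x₁, …, x_n] with S_n acting by permuting variables, and let s be a simple transposition. Then R is free as a module over the invariant subring Rˢ of rank 2, with basis {1, x_i} (where s = (i, i+1)); consequently the bimodule B_s = R ⊗_{Rˢ} R is free of rank 2 as a left R-module. -/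
open MvPolynomial

lemma stmt_18_key {n : ℕ} (i j : Fin n) (f : MvPolynomial (Fin n) ℝ) :
    ∃ b : MvPolynomial (Fin n) ℝ,
      MvPolynomial.rename (Equiv.swap i j) b = b ∧
      f - MvPolynomial.rename (Equiv.swap i j) f = b * (X i - X j) := by
  set e := Equiv.swap i j with he
  have hee : ∀ g : MvPolynomial (Fin n) ℝ, rename e (rename e g) = g := by
    intro g
    rw [MvPolynomial.rename_rename]
    have : (e : Fin n → Fin n) ∘ e = id := by
      funext x; simp [he, Equiv.swap_apply_self]
    rw [this, MvPolynomial.rename_id, AlgHom.id_apply]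
  induction f using MvPolynomial.induction_on with
  | C a => exact ⟨0, by simp, by simp⟩
  | add p q hp hq =>
    obtain ⟨b1, hb1, e1⟩ := hp
    obtain ⟨b2, hb2, e2⟩ := hq
    refine ⟨b1 + b2, by rw [map_add, hb1, hb2], ?_⟩
    rw [map_add]
    linear_combination e1 + e2
  | mul_X p k hp =>
    obtain ⟨b, hb, eb⟩ := hp
    by_cases hki : k = i
    · subst hki
      refine ⟨b * X k + rename e p, ?_, ?_⟩
      · rw [map_add, map_mul, hb, rename_X, hee,
          show e k = j from Equiv.swap_apply_left k j]
        linear_combination eb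
      · rw [map_mul, rename_X, show e k = j from Equiv.swap_apply_left k j]
        linear_combination (X k : MvPolynomial (Fin n) ℝ) * eb
    · by_cases hkj : k = j
      · subst hkj
        refine ⟨b * X k - rename e p, ?_, ?_⟩
        · rw [map_sub, map_mul, hb, rename_X, hee,
            show e k = i from Equiv.swap_apply_right i k]
          linear_combination -eb
        · rw [map_mul, rename_X, show e k = i from Equiv.swap_apply_right i k]
          linear_combination (X k : MvPolynomial (Fin n) ℝ) * eb
      · refine ⟨b * X k, ?_, ?_⟩
        · rw [map_mul, hb, rename_X,
            show e k = k from Equiv.swap_apply_of_ne_of_ne hki hkj]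
        · rw [map_mul, rename_X,
            show e k = k from Equiv.swap_apply_of_ne_of_ne hki hkj]
          linear_combination (X k : MvPolynomial (Fin n) ℝ) * eb

/-- Let `R = ℝ[x₁,…,x_n]` with `S_n` permuting the variables, and let `s = (i, i+1)` be a simple
transposition.  Then `R` is free of rank `2` over the invariant subring `Rˢ` with basis
`{1, x_i}`: every `f ∈ R` is uniquely `f = a + b·x_i` with `a, b` invariant under `s`
(i.e. `R = Rˢ·1 ⊕ Rˢ·x_i`).  Consequently the Soergel bimodule `B_s = R ⊗_{Rˢ} R` is free of
rank `2` as a left `R`-module. -/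
theorem stmt_18 (n : ℕ) (i : Fin n) (hi : (i : ℕ) + 1 < n) (f : MvPolynomial (Fin n) ℝ) :
    ∃! p : {g : MvPolynomial (Fin n) ℝ //
              MvPolynomial.rename (Equiv.swap i ⟨(i : ℕ) + 1, hi⟩) g = g} ×
           {g : MvPolynomial (Fin n) ℝ //
              MvPolynomial.rename (Equiv.swap i ⟨(i : ℕ) + 1, hi⟩) g = g},
      f = (p.1 : MvPolynomial (Fin n) ℝ) + (p.2 : MvPolynomial (Fin n) ℝ) * X i := by
  set j : Fin n := ⟨(i : ℕ) + 1, hi⟩ with hj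
  have hij : i ≠ j := by
    intro h
    have := congrArg Fin.val h
    simp [hj] at this
  have hXij : (X i - X j : MvPolynomial (Fin n) ℝ) ≠ 0 := by
    rw [sub_ne_zero]
    intro h
    exact hij (MvPolynomial.X_injective h)
  obtain ⟨b, hb, eb⟩ := stmt_18_key i j f
  have hei : Equiv.swap i j i = j := Equiv.swap_apply_left i j
  have ha : rename (Equiv.swap i j) (f - b * X i) = f - b * X i := by
    rw [map_sub, map_mul, hb, rename_X, hei]
    linear_combination -eb
  refine ⟨(⟨f - b * X i, ha⟩, ⟨b, hb⟩), by simp, ?_⟩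
  rintro ⟨⟨a', ha'⟩, ⟨b', hb'⟩⟩ hf
  simp only at hf
  have hf2 : rename (Equiv.swap i j) f = a' + b' * X j := by
    rw [hf, map_add, map_mul, ha', hb', rename_X, hei]
  have hbb : (b' - b) * (X i - X j) = 0 := by
    linear_combination hf2 - hf + eb
  have hb'b : b' = b := by
    rcases mul_eq_zero.mp hbb with h | h
    · exact sub_eq_zero.mp h
    · exact absurd h hXij
  have ha'a : a' = f - b * X i := by
    rw [hf, hb'b]; ring
  simp only [Prod.mk.injEq, Subtype.mk.injEq]
  exact ⟨ha'a, hb'b⟩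
end
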